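/- Define δ(α) = r − μ̃ − α√(1−ρ²)σ with σ > 0, ρ ∈ (−1,1), and let C^α(S) = S e^{−δ(α)τ}Φ(d₁(α)) − K e^{−rτ}Φ(d₂(α)) be the dividend-yield Black-Scholes call price with d₁(α) = (ln(S/K) + (r − δ(α) + σ²/2)τ)/(σ√τ), d₂(α) = d₁(α) − σ√τ, τ > 0, K > 0. Then α ↦ C^α(S) is non-decreasing on [0,∞) for every fixed S > 0; in particular the seller's call price (α ≥ 0) is at least the α = 0 (minimal-martingale-measure) price, which in turn is at least the buyer's call price (α replaced by −β, β ≥ 0). -/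

import Mathlib

noncomputable def stdNormalCDF (x : ℝ) : ℝ :=
  ∫ t in Set.Iic x, Real.exp (-t^2/2) / Real.sqrt (2*Real.pi)

/-- The dividend-yield Black–Scholes call price with `δ(α) = r - μ̃ - α√(1-ρ²)σ`. -/
noncomputable def callPrice (S K σ r τ ρ μt α : ℝ) : ℝ :=
  S * Real.exp (-(r - μt - α * Real.sqrt (1 - ρ^2) * σ)*τ) *
    stdNormalCDF ((Real.log (S/K)
      + (r - (r - μt - α * Real.sqrt (1 - ρ^2) * σ) + σ^2/2)*τ)/(σ*Real.sqrt τ))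
  - K * Real.exp (-r*τ) *
    stdNormalCDF ((Real.log (S/K)
      + (r - (r - μt - α * Real.sqrt (1 - ρ^2) * σ) + σ^2/2)*τ)/(σ*Real.sqrt τ)
      - σ*Real.sqrt τ)


lemma gaussPDF_integrable :
    MeasureTheory.Integrable (fun t : ℝ => Real.exp (-t^2/2) / Real.sqrt (2*Real.pi)) := by
  have h : MeasureTheory.Integrable (fun t : ℝ => Real.exp (-(1/2 : ℝ) * t^2)) :=
    integrable_exp_neg_mul_sq (by norm_num)
  have h2 := h.div_const (Real.sqrt (2*Real.pi))
  have heq : (fun t : ℝ => Real.exp (-t^2/2) / Real.sqrt (2*Real.pi))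
      = fun t : ℝ => Real.exp (-(1/2 : ℝ) * t^2) / Real.sqrt (2*Real.pi) := by
    funext t; rw [show -t^2/2 = -(1/2 : ℝ) * t^2 by ring]
  rw [heq]; exact h2

lemma gaussPDF_continuous :
    Continuous (fun t : ℝ => Real.exp (-t^2/2) / Real.sqrt (2*Real.pi)) := by
  fun_prop

lemma stdNormalCDF_nonneg (x : ℝ) : 0 ≤ stdNormalCDF x := by
  apply MeasureTheory.setIntegral_nonneg measurableSet_Iic
  intro t _; positivity

lemma stdNormalCDF_hasDerivAt (x : ℝ) :
    HasDerivAt stdNormalCDF (Real.exp (-x^2/2) / Real.sqrt (2*Real.pi)) x := by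
  set f := fun t : ℝ => Real.exp (-t^2/2) / Real.sqrt (2*Real.pi) with hf
  have hint : MeasureTheory.Integrable f := gaussPDF_integrable
  have hrepr : stdNormalCDF = fun y => (∫ t in Set.Iic (0:ℝ), f t) + ∫ t in (0:ℝ)..y, f t := by
    funext y
    rw [← intervalIntegral.integral_Iic_sub_Iic hint.integrableOn hint.integrableOn]
    unfold stdNormalCDF
    ring
  rw [hrepr]
  exact ((gaussPDF_continuous.integral_hasStrictDerivAt 0 x).hasDerivAt).const_add _

lemma call_monotone (S K σ r τ μt a : ℝ) (hS : 0 < S) (hK : 0 < K)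
    (hσ : 0 < σ) (hτ : 0 < τ) (ha : 0 ≤ a) :
    Monotone (fun α : ℝ =>
      S * Real.exp (-(r - μt - α * a * σ)*τ) *
        stdNormalCDF ((Real.log (S/K)
          + (r - (r - μt - α * a * σ) + σ^2/2)*τ)/(σ*Real.sqrt τ))
      - K * Real.exp (-r*τ) *
        stdNormalCDF ((Real.log (S/K)
          + (r - (r - μt - α * a * σ) + σ^2/2)*τ)/(σ*Real.sqrt τ)
          - σ*Real.sqrt τ)) := by
  set s := σ * Real.sqrt τ with hsdef
  have hst : 0 < Real.sqrt τ := Real.sqrt_pos.mpr hτ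
  have hs0 : 0 < s := mul_pos hσ hst
  set g : ℝ → ℝ := fun β =>
    (Real.log (S/K) + (r - (r - μt - β * a * σ) + σ^2/2)*τ)/s with hgdef
  have hc : (0:ℝ) < Real.sqrt (2*Real.pi) := Real.sqrt_pos.mpr (by positivity)
  set c := Real.sqrt (2*Real.pi) with hcdef
  have key : ∀ α : ℝ, HasDerivAt (fun β : ℝ =>
      S * Real.exp (-(r - μt - β * a * σ)*τ) * stdNormalCDF (g β)
      - K * Real.exp (-r*τ) * stdNormalCDF (g β - s))
      (S * Real.exp (-(r - μt - α * a * σ)*τ) * (a*σ*τ) * stdNormalCDF (g α)) α := by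
    intro α
    have hg : HasDerivAt g (a*σ*τ/s) α := by
      have h1 : g = fun β => β * (a*σ*τ/s) + (Real.log (S/K) + (μt + σ^2/2)*τ)/s := by
        funext β; rw [hgdef]; field_simp; ring
      rw [h1]
      simpa using ((hasDerivAt_id α).mul_const (a*σ*τ/s)).add_const ((Real.log (S/K) + (μt + σ^2/2)*τ)/s)
    have hE : HasDerivAt (fun β : ℝ => -(r - μt - β * a * σ)*τ) (a*σ*τ) α := by
      have h1 : (fun β : ℝ => -(r - μt - β * a * σ)*τ)
          = fun β => β * (a*σ*τ) + (-(r-μt)*τ) := by funext β; ring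
      rw [h1]
      simpa using ((hasDerivAt_id α).mul_const (a*σ*τ)).add_const (-(r-μt)*τ)
    have hexp : HasDerivAt (fun β : ℝ => Real.exp (-(r - μt - β * a * σ)*τ))
        (Real.exp (-(r - μt - α * a * σ)*τ) * (a*σ*τ)) α := hE.exp
    have hΦ1 : HasDerivAt (fun β => stdNormalCDF (g β))
        (Real.exp (-(g α)^2/2)/c * (a*σ*τ/s)) α :=
      (stdNormalCDF_hasDerivAt (g α)).comp α hg
    have hΦ2 : HasDerivAt (fun β => stdNormalCDF (g β - s))
        (Real.exp (-(g α - s)^2/2)/c * (a*σ*τ/s)) α :=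
      by have := (stdNormalCDF_hasDerivAt (g α - s)).comp α (hg.sub_const s); exact this
    have hterm1 := (hexp.const_mul S).mul hΦ1
    have hterm2 := hΦ2.const_mul (K * Real.exp (-r*τ))
    have hraw := hterm1.sub hterm2
    -- the Black–Scholes density identity
    have hga : g α * s = Real.log (S/K) + (r - (r - μt - α * a * σ) + σ^2/2)*τ :=
      div_mul_cancel₀ _ hs0.ne'
    have hs2 : s^2 = σ^2 * τ := by
      rw [hsdef, mul_pow, Real.sq_sqrt hτ.le]
    have hlog : Real.log (S/K) = Real.log S - Real.log K := Real.log_div hS.ne' hK.ne'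
    have key2 : S * Real.exp (-(r - μt - α * a * σ)*τ + -(g α)^2/2)
        = K * Real.exp (-r*τ + -(g α - s)^2/2) := by
      rw [← Real.exp_log hS, ← Real.exp_log hK, ← Real.exp_add, ← Real.exp_add,
        Real.exp_eq_exp]
      nlinarith [hga, hs2, hlog]
    have hid : S * Real.exp (-(r - μt - α * a * σ)*τ) * (Real.exp (-(g α)^2/2)/c)
        = K * Real.exp (-r*τ) * (Real.exp (-(g α - s)^2/2)/c) := by
      have e1 : S * Real.exp (-(r - μt - α * a * σ)*τ) * (Real.exp (-(g α)^2/2)/c)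
          = S * Real.exp (-(r - μt - α * a * σ)*τ + -(g α)^2/2) / c := by
        rw [Real.exp_add]; ring
      have e2 : K * Real.exp (-r*τ) * (Real.exp (-(g α - s)^2/2)/c)
          = K * Real.exp (-r*τ + -(g α - s)^2/2) / c := by
        rw [Real.exp_add]; ring
      rw [e1, e2, key2]
    refine hraw.congr_deriv ?_
    linear_combination (a*σ*τ/s) * hid
  have hmono : Monotone (fun β : ℝ =>
      S * Real.exp (-(r - μt - β * a * σ)*τ) * stdNormalCDF (g β)
      - K * Real.exp (-r*τ) * stdNormalCDF (g β - s)) := by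
    have hdiff : Differentiable ℝ (fun β : ℝ =>
        S * Real.exp (-(r - μt - β * a * σ)*τ) * stdNormalCDF (g β)
        - K * Real.exp (-r*τ) * stdNormalCDF (g β - s)) :=
      fun α => (key α).differentiableAt
    apply monotone_of_deriv_nonneg hdiff
    intro α
    rw [(key α).deriv]
    have h1 := stdNormalCDF_nonneg (g α)
    have h2 : (0:ℝ) ≤ S * Real.exp (-(r - μt - α * a * σ)*τ) * (a*σ*τ) := by positivity
    exact mul_nonneg h2 h1
  exact hmono

/-- The seller's call price is non-decreasing in the Sharpe ratio `α`; in particular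
the buyer's price (with `α` replaced by `-β`) is at most the `α = 0` price, which is
at most the seller's price. -/
theorem stmt16 (σ r τ ρ μt K : ℝ) (hσ : 0 < σ) (hτ : 0 < τ) (hK : 0 < K)
    (hρ : ρ ∈ Set.Ioo (-1 : ℝ) 1) :
    ∀ S : ℝ, 0 < S →
      MonotoneOn (fun α => callPrice S K σ r τ ρ μt α) (Set.Ici (0:ℝ))
      ∧ ∀ α β : ℝ, 0 ≤ α → 0 ≤ β →
        callPrice S K σ r τ ρ μt (-β) ≤ callPrice S K σ r τ ρ μt 0
        ∧ callPrice S K σ r τ ρ μt 0 ≤ callPrice S K σ r τ ρ μt α := by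
  intro S hS
  have hm : Monotone (fun α => callPrice S K σ r τ ρ μt α) :=
    call_monotone S K σ r τ μt (Real.sqrt (1 - ρ^2)) hS hK hσ hτ (Real.sqrt_nonneg _)
  exact ⟨hm.monotoneOn _, fun α β hα hβ => ⟨hm (by linarith), hm hα⟩⟩
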